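/- Let ω be a nondegenerate alternating bilinear form on ℂ^{2n}. The set of pairs (E, F) with F ⊂ E, dim F = 1, dim E = 2, and ω|_E ≡ 0 (E isotropic), is a nonempty proper closed Sp(ω)-stable subset of the flag variety {(E,F) : F ⊂ E, dim F = 1, dim E = 2}, and it is also a single Sp(ω)-orbit. -/

import Mathlib

open Module Set LinearMap

open Module Set

variable {K : Type} [Field K] {V : Type} [AddCommGroup V] [Module K V] [FiniteDimensional K V]

/-- Pair linear independence from a coefficient criterion. -/
lemma pair_li_of {a b : V} (h : ∀ c d : K, c • a + d • b = 0 → c = 0 ∧ d = 0) :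
    LinearIndependent K ![a, b] := by
  rw [Fintype.linearIndependent_iff]
  intro g hg
  rw [Fin.sum_univ_two] at hg
  obtain ⟨h0, h1⟩ := h _ _ hg
  intro i; fin_cases i <;> assumption

lemma pair_li_apply {a b : V} (h : LinearIndependent K ![a, b]) (c d : K)
    (hcd : c • a + d • b = 0) : c = 0 ∧ d = 0 := by
  rw [Fintype.linearIndependent_iff] at h
  have := h ![c, d] (by rw [Fin.sum_univ_two]; simpa using hcd)
  exact ⟨this 0, this 1⟩

lemma exists_dual_pair (f g : Module.Dual K V) (h : LinearIndependent K ![f, g]) :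
    ∃ u : V, f u = 1 ∧ g u = 0 := by
  classical
  have hinj : Function.Injective ((↑) : range ![f, g] → Module.Dual K V) := Subtype.val_injective
  have hli : LinearIndependent K ((↑) : range ![f, g] → Module.Dual K V) :=
    LinearIndependent.linearIndepOn_id h
  let s := LinearIndepOn.extend (v := id) (s := range ![f, g]) hli (Set.subset_univ _)
  let b : Basis s K (Module.Dual K V) := Basis.extend hli
  have hfs : f ∈ s := LinearIndepOn.subset_extend (v := id) (s := range ![f, g]) hli _ ⟨0, rfl⟩
  have hgs : g ∈ s := LinearIndepOn.subset_extend (v := id) (s := range ![f, g]) hli _ ⟨1, rfl⟩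
  have hfg : f ≠ g := by
    intro hfg
    have := pair_li_apply h 1 (-1) (by rw [hfg]; module)
    simpa using this.1
  let Φ : Module.Dual K (Module.Dual K V) := b.coord ⟨f, hfs⟩
  refine ⟨(Module.evalEquiv K V).symm Φ, ?_, ?_⟩
  · rw [Module.apply_evalEquiv_symm_apply]
    have : b ⟨f, hfs⟩ = f := Basis.extend_apply_self hli ⟨f, hfs⟩
    rw [← this]
    simp only [Φ, Basis.coord_apply, Basis.repr_self]
    simp
  · rw [Module.apply_evalEquiv_symm_apply]
    have : b ⟨g, hgs⟩ = g := Basis.extend_apply_self hli ⟨g, hgs⟩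
    rw [← this]
    simp only [Φ, Basis.coord_apply, Basis.repr_self]
    rw [Finsupp.single_apply_eq_zero]
    intro hh
    rw [Subtype.mk_eq_mk] at hh
    exact (hfg hh).elim
variable {K : Type} [Field K] {V V' : Type} [AddCommGroup V] [Module K V]
  [AddCommGroup V'] [Module K V']

/-- Glue an isometry on a subspace and one on its orthogonal complement. -/
lemma glue_isometry (B : LinearMap.BilinForm K V) (B' : LinearMap.BilinForm K V')
    (hB : B.IsRefl) (hB' : B'.IsRefl) (U : Submodule K V) (U' : Submodule K V')
    (hc : IsCompl U (B.orthogonal U)) (hc' : IsCompl U' (B'.orthogonal U'))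
    (g₁ : U ≃ₗ[K] U') (g₂ : B.orthogonal U ≃ₗ[K] B'.orthogonal U')
    (h₁ : ∀ x y : U, B' (g₁ x) (g₁ y) = B x y)
    (h₂ : ∀ x y : B.orthogonal U, B' (g₂ x) (g₂ y) = B x y) :
    ∃ g : V ≃ₗ[K] V', (∀ x y, B' (g x) (g y) = B x y) ∧ ∀ x : U, g x = g₁ x := by
  classical
  let e : (U × B.orthogonal U) ≃ₗ[K] V := Submodule.prodEquivOfIsCompl _ _ hc
  let e' : (U' × B'.orthogonal U') ≃ₗ[K] V' := Submodule.prodEquivOfIsCompl _ _ hc'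
  let g : V ≃ₗ[K] V' := e.symm.trans ((g₁.prodCongr g₂).trans e')
  have hgx : ∀ x : V, g x = (g₁ (e.symm x).1 : V') + (g₂ (e.symm x).2 : V') := by
    intro x
    show e' ((g₁.prodCongr g₂) (e.symm x)) = _
    rw [Submodule.coe_prodEquivOfIsCompl']
    rfl
  have hdec : ∀ x : V, x = ((e.symm x).1 : V) + ((e.symm x).2 : V) := by
    intro x
    conv_lhs => rw [← e.apply_symm_apply x]
    rw [Submodule.coe_prodEquivOfIsCompl']
  have horth : ∀ (p : U) (s : B.orthogonal U), B (p : V) (s : V) = 0 ∧ B (s : V) (p : V) = 0 := by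
    intro p s
    have h1 : B (p : V) (s : V) = 0 := s.2 p p.2
    exact ⟨h1, hB _ _ h1⟩
  have horth' : ∀ (p : U') (s : B'.orthogonal U'),
      B' (p : V') (s : V') = 0 ∧ B' (s : V') (p : V') = 0 := by
    intro p s
    have h1 : B' (p : V') (s : V') = 0 := s.2 p p.2
    exact ⟨h1, hB' _ _ h1⟩
  refine ⟨g, fun x y => ?_, fun x => ?_⟩
  · rw [hgx x, hgx y]
    conv_rhs => rw [hdec x, hdec y]
    simp only [map_add, LinearMap.add_apply]
    rw [h₁, h₂, (horth' _ _).1, (horth' _ _).2, (horth _ _).1, (horth _ _).2]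
  · rw [hgx x, Submodule.prodEquivOfIsCompl_symm_apply_left]
    simp
variable {K : Type} [Field K] {V : Type} [AddCommGroup V] [Module K V]

lemma restrict_alt (B : LinearMap.BilinForm K V) (hB : B.IsAlt) (U : Submodule K V) :
    (B.restrict U).IsAlt := fun x => hB x

lemma orth_restrict_nondeg [FiniteDimensional K V] (B : LinearMap.BilinForm K V)
    (hB : B.Nondegenerate) (hr : B.IsRefl) (U : Submodule K V)
    (hc : IsCompl U (B.orthogonal U)) :
    (B.restrict (B.orthogonal U)).Nondegenerate := by
  refine (LinearMap.IsRefl.nondegenerate_iff_separatingLeft (B := B.restrict (B.orthogonal U)) (fun x y h => hr _ _ h)).mpr ?_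
  intro x hx
  have hx0 : (x : V) = 0 := by
    apply hB.1
    intro m
    have hm : m ∈ U ⊔ B.orthogonal U := by rw [hc.sup_eq_top]; trivial
    obtain ⟨p, hp, s, hs, rfl⟩ := Submodule.mem_sup.mp hm
    rw [map_add]
    have h1 : B (x : V) p = 0 := hr _ _ (x.2 p hp)
    have h2 : B (x : V) s = 0 := hx ⟨s, hs⟩
    rw [h1, h2, add_zero]
  exact Subtype.ext hx0

lemma span_pair_restrict_nondeg (B : LinearMap.BilinForm K V) (hB : B.IsAlt)
    {v u : V} (hvu : B v u = 1) :
    (B.restrict (Submodule.span K (Set.range ![v, u]))).Nondegenerate := by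
  refine (LinearMap.IsRefl.nondegenerate_iff_separatingLeft (restrict_alt B hB _).isRefl).mpr ?_
  intro x hx
  have hv : v ∈ Submodule.span K (Set.range ![v, u]) :=
    Submodule.subset_span ⟨0, rfl⟩
  have hu : u ∈ Submodule.span K (Set.range ![v, u]) :=
    Submodule.subset_span ⟨1, rfl⟩
  obtain ⟨c, hc⟩ := (Submodule.mem_span_range_iff_exists_fun K).mp x.2
  rw [Fin.sum_univ_two] at hc
  have huv : B u v = -1 := by rw [← LinearMap.IsAlt.neg hB v u, hvu]
  have e1 : B (x : V) u = c 0 := by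
    rw [← hc]; simp [map_add, hvu, hB u, smul_eq_mul]
  have e2 : B (x : V) v = -(c 1) := by
    rw [← hc]; simp [map_add, huv, hB v, smul_eq_mul]
  have h1 := hx ⟨u, hu⟩
  have h2 := hx ⟨v, hv⟩
  rw [LinearMap.BilinForm.restrict_apply] at h1 h2
  apply Subtype.ext
  show (x : V) = 0
  rw [← hc]
  have : c 0 = 0 := by rw [← e1]; exact h1
  have : c 1 = 0 := by rw [← neg_eq_zero, ← e2]; exact h2
  simp_all
variable {K : Type} [Field K] {V V' : Type} [AddCommGroup V] [Module K V]
  [AddCommGroup V'] [Module K V']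

lemma isometry_of_basis {ι : Type} [Fintype ι] (B : LinearMap.BilinForm K V)
    (B' : LinearMap.BilinForm K V') (g : V ≃ₗ[K] V') (b : Basis ι K V)
    (h : ∀ i j, B' (g (b i)) (g (b j)) = B (b i) (b j)) :
    ∀ x y, B' (g x) (g y) = B x y := by
  have key : B'.compl₁₂ (g : V →ₗ[K] V') (g : V →ₗ[K] V') = B :=
    LinearMap.ext_basis b b (by
      intro i j
      rw [LinearMap.compl₁₂_apply]
      exact h i j)
  intro x y
  conv_rhs => rw [← key]
  rfl

lemma pair_li_of' {a b : V} (h : ∀ c d : K, c • a + d • b = 0 → c = 0 ∧ d = 0) :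
    LinearIndependent K ![a, b] := by
  rw [Fintype.linearIndependent_iff]
  intro g hg
  rw [Fin.sum_univ_two] at hg
  obtain ⟨h0, h1⟩ := h _ _ (by simpa using hg)
  intro i; fin_cases i <;> assumption

lemma hyp_pair_li (B : LinearMap.BilinForm K V) (hB : B.IsAlt) {v u : V} (hvu : B v u = 1) :
    LinearIndependent K ![v, u] := by
  apply pair_li_of'
  intro c d hcd
  have h1 : B (c • v + d • u) u = c := by
    simp [hvu, hB u, smul_eq_mul]
  have h2 : B (c • v + d • u) v = -d := by
    have huv : B u v = -1 := by rw [← LinearMap.IsAlt.neg hB v u, hvu]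
    simp [huv, hB v, smul_eq_mul]
  rw [hcd] at h1 h2
  simp only [map_zero, LinearMap.zero_apply] at h1 h2
  exact ⟨h1.symm, by rw [← neg_eq_zero, h2]⟩
section helpers
variable {K : Type} [Field K] {V V' : Type} [AddCommGroup V] [Module K V]
  [AddCommGroup V'] [Module K V']

lemma spe_zero (B : LinearMap.BilinForm K V) (B' : LinearMap.BilinForm K V')
    (h : Subsingleton V) (h' : Subsingleton V') :
    ∃ g : V ≃ₗ[K] V', ∀ x y, B' (g x) (g y) = B x y := by
  refine ⟨LinearEquiv.ofLinear (0 : V →ₗ[K] V') (0 : V' →ₗ[K] V)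
    (LinearMap.ext fun x => Subsingleton.elim _ _)
    (LinearMap.ext fun x => Subsingleton.elim _ _), fun x y => ?_⟩
  have hx : x = 0 := Subsingleton.elim _ _
  have hy : y = 0 := Subsingleton.elim _ _
  subst hx; subst hy
  simp
end helpers

lemma symp_equiv {K : Type} [Field K] (k : ℕ) :
    ∀ (V : Type) (V' : Type) [AddCommGroup V] [Module K V] [FiniteDimensional K V]
      [AddCommGroup V'] [Module K V'] [FiniteDimensional K V']
      (B : LinearMap.BilinForm K V) (B' : LinearMap.BilinForm K V'),
      B.IsAlt → B.Nondegenerate → B'.IsAlt → B'.Nondegenerate →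
      finrank K V = k → finrank K V' = k →
      ∃ g : V ≃ₗ[K] V', ∀ x y, B' (g x) (g y) = B x y := by
  induction k using Nat.strong_induction_on with
  | _ k IH =>
  intro V V' _ _ _ _ _ _ B B' halt hnd halt' hnd' hk hk'
  rcases Nat.eq_zero_or_pos k with h0 | hpos
  · subst h0
    exact spe_zero B B' (finrank_zero_iff.mp hk) (finrank_zero_iff.mp hk')
  · -- pick hyperbolic pairs
    have hvt : ∃ v : V, v ≠ 0 := by
      have : Nontrivial V := finrank_pos_iff.mp (hk ▸ hpos)
      exact exists_ne 0
    obtain ⟨v, hv⟩ := hvt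
    have hvt' : ∃ v : V', v ≠ 0 := by
      have : Nontrivial V' := finrank_pos_iff.mp (hk' ▸ hpos)
      exact exists_ne 0
    obtain ⟨v', hv'⟩ := hvt'
    obtain ⟨u₀, hu₀⟩ : ∃ u₀, B v u₀ ≠ 0 := by
      by_contra hcon
      push_neg at hcon
      exact hv (hnd.1 v hcon)
    obtain ⟨u₀', hu₀'⟩ : ∃ u₀, B' v' u₀ ≠ 0 := by
      by_contra hcon
      push_neg at hcon
      exact hv' (hnd'.1 v' hcon)
    set u : V := (B v u₀)⁻¹ • u₀ with hu_def
    set u' : V' := (B' v' u₀')⁻¹ • u₀' with hu'_def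
    have hvu : B v u = 1 := by
      rw [hu_def, map_smul, smul_eq_mul, inv_mul_cancel₀ hu₀]
    have hvu' : B' v' u' = 1 := by
      rw [hu'_def, map_smul, smul_eq_mul, inv_mul_cancel₀ hu₀']
    clear hu_def hu'_def hu₀ hu₀' hv hv'
    have hrefl : B.IsRefl := LinearMap.IsAlt.isRefl halt
    have hrefl' : B'.IsRefl := LinearMap.IsAlt.isRefl halt'
    set U : Submodule K V := Submodule.span K (Set.range ![v, u]) with hU_def
    set U' : Submodule K V' := Submodule.span K (Set.range ![v', u']) with hU'_def
    have hUnd := span_pair_restrict_nondeg B halt hvu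
    have hUnd' := span_pair_restrict_nondeg B' halt' hvu'
    have hc : IsCompl U (B.orthogonal U) :=
      LinearMap.BilinForm.isCompl_orthogonal_of_restrict_nondegenerate hrefl hUnd
    have hc' : IsCompl U' (B'.orthogonal U') :=
      LinearMap.BilinForm.isCompl_orthogonal_of_restrict_nondegenerate hrefl' hUnd'
    have hli := hyp_pair_li B halt hvu
    have hli' := hyp_pair_li B' halt' hvu'
    have hfU : finrank K U = 2 := by
      rw [hU_def, finrank_span_eq_card hli]
      simp
    have hfU' : finrank K U' = 2 := by
      rw [hU'_def, finrank_span_eq_card hli']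
      simp
    have hsum := Submodule.finrank_add_eq_of_isCompl hc
    have hsum' := Submodule.finrank_add_eq_of_isCompl hc'
    rw [hfU, hk] at hsum
    rw [hfU', hk'] at hsum'
    -- the restricted forms on the orthogonal complements
    have ha₂ : (B.restrict (B.orthogonal U)).IsAlt := restrict_alt B halt _
    have ha₂' : (B'.restrict (B'.orthogonal U')).IsAlt := restrict_alt B' halt' _
    have hn₂ : (B.restrict (B.orthogonal U)).Nondegenerate :=
      orth_restrict_nondeg B hnd hrefl U hc
    have hn₂' : (B'.restrict (B'.orthogonal U')).Nondegenerate :=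
      orth_restrict_nondeg B' hnd' hrefl' U' hc'
    obtain ⟨g₂, hg₂⟩ := IH (finrank K (B.orthogonal U)) (by omega)
      (B.orthogonal U) (B'.orthogonal U')
      (B.restrict (B.orthogonal U)) (B'.restrict (B'.orthogonal U'))
      ha₂ hn₂ ha₂' hn₂' rfl (by omega)
    -- the isometry on the hyperbolic planes
    let b : Basis (Fin 2) K U := Basis.span hli
    let b' : Basis (Fin 2) K U' := Basis.span hli'
    let g₁ : U ≃ₗ[K] U' := b.equiv b' (Equiv.refl _)
    have huv : B u v = -1 := by rw [← LinearMap.IsAlt.neg halt v u, hvu]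
    have huv' : B' u' v' = -1 := by rw [← LinearMap.IsAlt.neg halt' v' u', hvu']
    have h₁ : ∀ x y : U, (B'.restrict U') (g₁ x) (g₁ y) = (B.restrict U) x y := by
      apply isometry_of_basis (B.restrict U) (B'.restrict U') g₁ b
      intro i j
      have hgb : ∀ i, g₁ (b i) = b' i := fun i => b.equiv_apply i b' (Equiv.refl _)
      have hbc : ∀ i, (b i : V) = ![v, u] i := fun i => congrArg Subtype.val (Basis.span_apply hli i)
      have hbc' : ∀ i, (b' i : V') = ![v', u'] i := fun i => congrArg Subtype.val (Basis.span_apply hli' i)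
      rw [hgb, hgb]
      show B' (b' i : V') (b' j : V') = B (b i : V) (b j : V)
      rw [hbc, hbc, hbc', hbc']
      fin_cases i <;> fin_cases j <;>
        simp [hvu, hvu', huv, huv', halt v, halt u, halt' v', halt' u']
    obtain ⟨g, hg, -⟩ := glue_isometry B B' hrefl hrefl' U U' hc hc' g₁ g₂
      (fun x y => h₁ x y) (fun x y => hg₂ x y)
    exact ⟨g, hg⟩

section more
variable {K : Type} [Field K] {V : Type} [AddCommGroup V] [Module K V]

lemma pair_li_of'' {a b : V} (h : ∀ c d : K, c • a + d • b = 0 → c = 0 ∧ d = 0) :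
    LinearIndependent K ![a, b] := by
  rw [Fintype.linearIndependent_iff]
  intro g hg
  rw [Fin.sum_univ_two] at hg
  obtain ⟨h0, h1⟩ := h _ _ (by simpa using hg)
  intro i; fin_cases i <;> assumption

lemma pair_li_apply'' {a b : V} (h : LinearIndependent K ![a, b]) (c d : K)
    (hcd : c • a + d • b = 0) : c = 0 ∧ d = 0 := by
  rw [Fintype.linearIndependent_iff] at h
  have := h ![c, d] (by rw [Fin.sum_univ_two]; simpa using hcd)
  exact ⟨this 0, this 1⟩

lemma pair_li_swap {a b : V} (h : LinearIndependent K ![a, b]) :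
    LinearIndependent K ![b, a] := by
  apply pair_li_of''
  intro c d hcd
  have := pair_li_apply'' h d c (by rw [← hcd]; abel)
  exact ⟨this.2, this.1⟩

lemma quad_exists [FiniteDimensional K V] (B : LinearMap.BilinForm K V)
    (halt : B.IsAlt) (hnd : B.Nondegenerate) {v w : V}
    (hli : LinearIndependent K ![v, w]) (hvw : B v w = 0) :
    ∃ u z : V, B v u = 1 ∧ B w u = 0 ∧ B v z = 0 ∧ B w z = 1 ∧ B u z = 0 := by
  have hker : LinearMap.ker B = ⊥ := by
    rw [LinearMap.ker_eq_bot']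
    intro m hm
    exact hnd.1 m (fun n => by rw [hm]; rfl)
  have hmap : LinearIndependent K (B ∘ ![v, w]) := hli.map' B hker
  have heq : (B ∘ ![v, w]) = ![B v, B w] := by
    ext i x; fin_cases i <;> rfl
  rw [heq] at hmap
  obtain ⟨u, hu1, hu2⟩ := exists_dual_pair (B v) (B w) hmap
  obtain ⟨z₀, hz1, hz2⟩ := exists_dual_pair (B w) (B v) (pair_li_swap hmap)
  refine ⟨u, z₀ + (B u z₀) • v, hu1, hu2, ?_, ?_, ?_⟩
  · rw [map_add, map_smul, hz2, smul_eq_mul, halt v, mul_zero, add_zero]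
  · have hwv : B w v = 0 := by rw [← LinearMap.IsAlt.neg halt v w, hvw, neg_zero]
    rw [map_add, map_smul, hz1, smul_eq_mul, hwv, mul_zero, add_zero]
  · have huv : B u v = -1 := by rw [← LinearMap.IsAlt.neg halt v u, hu1]
    rw [map_add, map_smul, smul_eq_mul, huv]
    ring

section quad
variable (B : LinearMap.BilinForm K V) (halt : B.IsAlt) {v w u z : V}
  (h1 : B v u = 1) (h2 : B w u = 0) (h3 : B v z = 0) (h4 : B w z = 1)
  (h5 : B u z = 0) (hvw : B v w = 0)

include halt h1 h2 h3 h4 h5 hvw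

lemma quad_li : LinearIndependent K ![v, w, u, z] := by
  have huv : B u v = -1 := by rw [← LinearMap.IsAlt.neg halt v u, h1]
  have hwv : B w v = 0 := by rw [← LinearMap.IsAlt.neg halt v w, hvw, neg_zero]
  have huw : B u w = 0 := by rw [← LinearMap.IsAlt.neg halt w u, h2, neg_zero]
  have hzv : B z v = 0 := by rw [← LinearMap.IsAlt.neg halt v z, h3, neg_zero]
  have hzw : B z w = -1 := by rw [← LinearMap.IsAlt.neg halt w z, h4]
  have hzu : B z u = 0 := by rw [← LinearMap.IsAlt.neg halt u z, h5, neg_zero]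
  rw [Fintype.linearIndependent_iff]
  intro g hg
  rw [Fin.sum_univ_four] at hg
  have hg' : g 0 • v + g 1 • w + g 2 • u + g 3 • z = 0 := by
    simpa using hg
  have happ : ∀ t : V, B (g 0 • v + g 1 • w + g 2 • u + g 3 • z) t = 0 := by
    intro t
    rw [hg']; simp
  have e0 := happ u
  have e1 := happ z
  have e2 := happ v
  have e3 := happ w
  simp only [map_add, map_smul, LinearMap.add_apply, LinearMap.smul_apply, smul_eq_mul,
    h1, h2, h3, h4, h5, huv, hwv, huw, hzv, hzw, hzu, halt v, halt w, halt u, halt z,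
    mul_zero, mul_one, zero_add, add_zero, mul_neg] at e0 e1 e2 e3
  intro i
  fin_cases i <;> simp_all <;> omega

lemma quad_restrict_nondeg :
    (B.restrict (Submodule.span K (Set.range ![v, w, u, z]))).Nondegenerate := by
  refine (LinearMap.IsRefl.nondegenerate_iff_separatingLeft (restrict_alt B halt _).isRefl).mpr ?_
  have huv : B u v = -1 := by rw [← LinearMap.IsAlt.neg halt v u, h1]
  have hwv : B w v = 0 := by rw [← LinearMap.IsAlt.neg halt v w, hvw, neg_zero]
  have huw : B u w = 0 := by rw [← LinearMap.IsAlt.neg halt w u, h2, neg_zero]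
  have hzv : B z v = 0 := by rw [← LinearMap.IsAlt.neg halt v z, h3, neg_zero]
  have hzw : B z w = -1 := by rw [← LinearMap.IsAlt.neg halt w z, h4]
  have hzu : B z u = 0 := by rw [← LinearMap.IsAlt.neg halt u z, h5, neg_zero]
  intro x hx
  have hmem : ∀ i : Fin 4, ![v, w, u, z] i ∈ Submodule.span K (Set.range ![v, w, u, z]) :=
    fun i => Submodule.subset_span ⟨i, rfl⟩
  obtain ⟨c, hc⟩ := (Submodule.mem_span_range_iff_exists_fun K).mp x.2
  rw [Fin.sum_univ_four] at hc
  have hc' : c 0 • v + c 1 • w + c 2 • u + c 3 • z = (x : V) := by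
    simpa using hc
  have happ : ∀ t : V, ∀ ht : t ∈ Submodule.span K (Set.range ![v, w, u, z]),
      B (x : V) t = 0 := by
    intro t ht
    exact hx ⟨t, ht⟩
  have e0 := happ u (hmem 2)
  have e1 := happ z (hmem 3)
  have e2 := happ v (hmem 0)
  have e3 := happ w (hmem 1)
  rw [← hc'] at e0 e1 e2 e3
  simp only [map_add, map_smul, LinearMap.add_apply, LinearMap.smul_apply, smul_eq_mul,
    h1, h2, h3, h4, h5, hvw, huv, hwv, huw, hzv, hzw, hzu, halt v, halt w, halt u, halt z,
    mul_zero, mul_one, zero_add, add_zero, mul_neg, neg_eq_zero] at e0 e1 e2 e3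
  apply Subtype.ext
  show (x : V) = 0
  rw [← hc', e0, e1, e2, e3]
  simp

end quad

end more

section trans
variable {K : Type} [Field K] {V : Type} [AddCommGroup V] [Module K V] [FiniteDimensional K V]

lemma trans_pairs (B : LinearMap.BilinForm K V) (halt : B.IsAlt) (hnd : B.Nondegenerate)
    {v w v' w' : V} (h : LinearIndependent K ![v, w]) (h' : LinearIndependent K ![v', w'])
    (hvw : B v w = 0) (hv'w' : B v' w' = 0) :
    ∃ g : V ≃ₗ[K] V, (∀ x y, B (g x) (g y) = B x y) ∧ g v = v' ∧ g w = w' := by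
  classical
  have hrefl : B.IsRefl := LinearMap.IsAlt.isRefl halt
  obtain ⟨u, z, h1, h2, h3, h4, h5⟩ := quad_exists B halt hnd h hvw
  obtain ⟨u', z', h1', h2', h3', h4', h5'⟩ := quad_exists B halt hnd h' hv'w'
  have li : LinearIndependent K ![v, w, u, z] := quad_li B halt h1 h2 h3 h4 h5 hvw
  have li' : LinearIndependent K ![v', w', u', z'] := quad_li B halt h1' h2' h3' h4' h5' hv'w'
  have hUnd := quad_restrict_nondeg B halt h1 h2 h3 h4 h5 hvw
  have hUnd' := quad_restrict_nondeg B halt h1' h2' h3' h4' h5' hv'w'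
  set U : Submodule K V := Submodule.span K (Set.range ![v, w, u, z]) with hUdef
  set U' : Submodule K V := Submodule.span K (Set.range ![v', w', u', z']) with hU'def
  have hc : IsCompl U (B.orthogonal U) :=
    LinearMap.BilinForm.isCompl_orthogonal_of_restrict_nondegenerate hrefl hUnd
  have hc' : IsCompl U' (B.orthogonal U') :=
    LinearMap.BilinForm.isCompl_orthogonal_of_restrict_nondegenerate hrefl hUnd'
  have hfU : finrank K U = 4 := by
    rw [hUdef, finrank_span_eq_card li]; simp
  have hfU' : finrank K U' = 4 := by
    rw [hU'def, finrank_span_eq_card li']; simp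
  have hsum := Submodule.finrank_add_eq_of_isCompl hc
  have hsum' := Submodule.finrank_add_eq_of_isCompl hc'
  rw [hfU] at hsum
  rw [hfU'] at hsum'
  obtain ⟨g₂, hg₂⟩ := symp_equiv (finrank K (B.orthogonal U))
    (B.orthogonal U) (B.orthogonal U')
    (B.restrict (B.orthogonal U)) (B.restrict (B.orthogonal U'))
    (restrict_alt B halt _) (orth_restrict_nondeg B hnd hrefl U hc)
    (restrict_alt B halt _) (orth_restrict_nondeg B hnd hrefl U' hc')
    rfl (by omega)
  let b : Basis (Fin 4) K U := Basis.span li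
  let b' : Basis (Fin 4) K U' := Basis.span li'
  let g₁ : U ≃ₗ[K] U' := b.equiv b' (Equiv.refl _)
  have hgb : ∀ i, g₁ (b i) = b' i := fun i => b.equiv_apply i b' (Equiv.refl _)
  have hbc : ∀ i, (b i : V) = ![v, w, u, z] i := fun i => congrArg Subtype.val (Basis.span_apply li i)
  have hbc' : ∀ i, (b' i : V) = ![v', w', u', z'] i := fun i => congrArg Subtype.val (Basis.span_apply li' i)
  have huv : B u v = -1 := by rw [← LinearMap.IsAlt.neg halt v u, h1]
  have hwv : B w v = 0 := by rw [← LinearMap.IsAlt.neg halt v w, hvw, neg_zero]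
  have huw : B u w = 0 := by rw [← LinearMap.IsAlt.neg halt w u, h2, neg_zero]
  have hzv : B z v = 0 := by rw [← LinearMap.IsAlt.neg halt v z, h3, neg_zero]
  have hzw : B z w = -1 := by rw [← LinearMap.IsAlt.neg halt w z, h4]
  have hzu : B z u = 0 := by rw [← LinearMap.IsAlt.neg halt u z, h5, neg_zero]
  have huv' : B u' v' = -1 := by rw [← LinearMap.IsAlt.neg halt v' u', h1']
  have hwv' : B w' v' = 0 := by rw [← LinearMap.IsAlt.neg halt v' w', hv'w', neg_zero]
  have huw' : B u' w' = 0 := by rw [← LinearMap.IsAlt.neg halt w' u', h2', neg_zero]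
  have hzv' : B z' v' = 0 := by rw [← LinearMap.IsAlt.neg halt v' z', h3', neg_zero]
  have hzw' : B z' w' = -1 := by rw [← LinearMap.IsAlt.neg halt w' z', h4']
  have hzu' : B z' u' = 0 := by rw [← LinearMap.IsAlt.neg halt u' z', h5', neg_zero]
  have h₁ : ∀ x y : U, (B.restrict U') (g₁ x) (g₁ y) = (B.restrict U) x y := by
    apply isometry_of_basis (B.restrict U) (B.restrict U') g₁ b
    intro i j
    rw [hgb, hgb]
    show B (b' i : V) (b' j : V) = B (b i : V) (b j : V)
    rw [hbc, hbc, hbc', hbc']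
    fin_cases i <;> fin_cases j <;>
      simp [h1, h2, h3, h4, h5, hvw, huv, hwv, huw, hzv, hzw, hzu,
        h1', h2', h3', h4', h5', hv'w', huv', hwv', huw', hzv', hzw', hzu',
        halt v, halt w, halt u, halt z, halt v', halt w', halt u', halt z']
  obtain ⟨g, hg, hfix⟩ := glue_isometry B B hrefl hrefl U U' hc hc' g₁ g₂
    (fun x y => h₁ x y) (fun x y => hg₂ x y)
  have hmem : ∀ i : Fin 4, ![v, w, u, z] i ∈ U := fun i => Submodule.subset_span ⟨i, rfl⟩
  have key : ∀ i : Fin 4, g (![v, w, u, z] i) = ![v', w', u', z'] i := by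
    intro i
    have hb : (⟨![v, w, u, z] i, hmem i⟩ : U) = b i := Subtype.ext (hbc i).symm
    have h2 : g (![v, w, u, z] i) = (g₁ ⟨![v, w, u, z] i, hmem i⟩ : V) :=
      hfix ⟨![v, w, u, z] i, hmem i⟩
    rw [h2, hb, hgb, hbc']
  exact ⟨g, hg, key 0, key 1⟩

end trans

section flagex
variable {K : Type} [Field K] {V : Type} [AddCommGroup V] [Module K V] [FiniteDimensional K V]

lemma pair_li_of_not_mem {v w : V} (hv : v ≠ 0) (hw : w ∉ Submodule.span K {v}) :
    LinearIndependent K ![v, w] := by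
  apply pair_li_of''
  intro c d hcd
  have hd : d = 0 := by
    by_contra hd
    apply hw
    have : w = (-d⁻¹ * c) • v := by
      have hdw : d • w = -(c • v) := by
        have := hcd
        rw [add_eq_zero_iff_eq_neg] at this
        rw [← neg_eq_iff_eq_neg] at this
        rw [← this]
      calc w = d⁻¹ • (d • w) := by rw [smul_smul, inv_mul_cancel₀ hd, one_smul]
        _ = d⁻¹ • (-(c • v)) := by rw [hdw]
        _ = (-d⁻¹ * c) • v := by
            rw [smul_neg, smul_smul, ← neg_smul, neg_mul]
    rw [this]
    exact Submodule.smul_mem _ _ (Submodule.mem_span_singleton_self v)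
  rw [hd, zero_smul, add_zero, smul_eq_zero] at hcd
  exact ⟨hcd.resolve_right hv, hd⟩

lemma flag_extract (p : Submodule K V × Submodule K V)
    (hle : p.2 ≤ p.1) (h1 : finrank K p.2 = 1) (h2 : finrank K p.1 = 2) :
    ∃ v w : V, LinearIndependent K ![v, w] ∧
      p.2 = Submodule.span K {v} ∧ p.1 = Submodule.span K (Set.range ![v, w]) := by
  have hbot : p.2 ≠ ⊥ := by
    intro hb
    rw [hb] at h1
    simp at h1
  obtain ⟨v, hvmem, hv⟩ := Submodule.exists_mem_ne_zero_of_ne_bot hbot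
  have hspanv : Submodule.span K {v} = p.2 := by
    apply Submodule.eq_of_le_of_finrank_le
    · rwa [Submodule.span_le, Set.singleton_subset_iff]
    · rw [h1, finrank_span_singleton hv]
  have hlt : p.2 < p.1 := lt_of_le_of_ne hle (by
    intro he
    rw [he, h2] at h1
    omega)
  obtain ⟨w, hwmem, hwnot⟩ := SetLike.exists_of_lt hlt
  have hwns : w ∉ Submodule.span K {v} := by rwa [hspanv]
  have hli : LinearIndependent K ![v, w] := pair_li_of_not_mem hv hwns
  refine ⟨v, w, hli, hspanv.symm, ?_⟩
  symm
  apply Submodule.eq_of_le_of_finrank_le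
  · rw [Submodule.span_le]
    rintro x ⟨i, rfl⟩
    fin_cases i
    · exact hle hvmem
    · exact hwmem
  · rw [h2, finrank_span_eq_card hli]
    simp

lemma map_span_pair (g : V ≃ₗ[K] V) (v w : V) :
    Submodule.map (g : V →ₗ[K] V) (Submodule.span K (Set.range ![v, w])) =
      Submodule.span K (Set.range ![g v, g w]) := by
  rw [Submodule.map_span]
  congr 1
  rw [← Set.range_comp]
  have : ((g : V →ₗ[K] V) : V → V) ∘ ![v, w] = ![g v, g w] := by
    ext i
    fin_cases i <;> rfl
  rw [this]

end flagex

/-- Let `ω` be a nondegenerate alternating form on `ℂ^{2n}` (`n ≥ 2`). The set of flags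
`(E, F)`, `F ⊂ E`, `dim F = 1`, `dim E = 2`, with `E` isotropic, is a nonempty proper
`Sp(ω)`-stable subset of the flag variety, a single `Sp(ω)`-orbit, and it is closed:
in the chart of linearly independent pairs `(v, w)` spanning such flags, it is cut out
by the closed condition `ω v w = 0`. -/
theorem stmt_9 (n : ℕ) (hn : 2 ≤ n)
    (ω : LinearMap.BilinForm ℂ (Fin (2 * n) → ℂ))
    (halt : ω.IsAlt) (hnd : ω.Nondegenerate) :
    let Fl : Set (Submodule ℂ (Fin (2 * n) → ℂ) × Submodule ℂ (Fin (2 * n) → ℂ)) :=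
      {p | p.2 ≤ p.1 ∧ finrank ℂ p.2 = 1 ∧ finrank ℂ p.1 = 2}
    let Z : Set (Submodule ℂ (Fin (2 * n) → ℂ) × Submodule ℂ (Fin (2 * n) → ℂ)) :=
      {p ∈ Fl | ∀ x ∈ p.1, ∀ y ∈ p.1, ω x y = 0}
    Z.Nonempty ∧ Z ⊂ Fl ∧
    (∀ g : (Fin (2 * n) → ℂ) ≃ₗ[ℂ] (Fin (2 * n) → ℂ),
      (∀ x y, ω (g x) (g y) = ω x y) → ∀ p ∈ Z,
        (Submodule.map (g : (Fin (2 * n) → ℂ) →ₗ[ℂ] (Fin (2 * n) → ℂ)) p.1,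
         Submodule.map (g : (Fin (2 * n) → ℂ) →ₗ[ℂ] (Fin (2 * n) → ℂ)) p.2) ∈ Z) ∧
    (∀ p ∈ Z, ∀ q ∈ Z,
      ∃ g : (Fin (2 * n) → ℂ) ≃ₗ[ℂ] (Fin (2 * n) → ℂ),
        (∀ x y, ω (g x) (g y) = ω x y) ∧
        Submodule.map (g : (Fin (2 * n) → ℂ) →ₗ[ℂ] (Fin (2 * n) → ℂ)) p.1 = q.1 ∧
        Submodule.map (g : (Fin (2 * n) → ℂ) →ₗ[ℂ] (Fin (2 * n) → ℂ)) p.2 = q.2) ∧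
    IsClosed {q : {p : (Fin (2 * n) → ℂ) × (Fin (2 * n) → ℂ) //
        LinearIndependent ℂ ![p.1, p.2]} | ω q.val.1 q.val.2 = 0} := by
  intro Fl Z
  set V := Fin (2 * n) → ℂ with hV
  have hdim : finrank ℂ V = 2 * n := Module.finrank_fin_fun ℂ
  have hnontriv : Nontrivial V := by
    have h0 : 0 < finrank ℂ V := by omega
    exact (Module.finrank_pos_iff (R := ℂ)).mp h0
  -- a flag built from an independent pair lies in Fl
  have flag_mk : ∀ v w : V, LinearIndependent ℂ ![v, w] →
      (Submodule.span ℂ (Set.range ![v, w]), Submodule.span ℂ {v}) ∈ Fl := by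
    intro v w hli
    have hv : v ≠ 0 := by
      intro h0
      have := pair_li_apply'' hli 1 0 (by rw [h0]; simp)
      simpa using this.1
    refine ⟨?_, ?_, ?_⟩
    · rw [Submodule.span_le, Set.singleton_subset_iff]
      exact Submodule.subset_span ⟨0, rfl⟩
    · exact finrank_span_singleton hv
    · rw [finrank_span_eq_card hli]; simp
  -- membership criterion for span of a pair
  have mem_pair : ∀ v w x : V, x ∈ Submodule.span ℂ (Set.range ![v, w]) →
      ∃ c d : ℂ, x = c • v + d • w := by
    intro v w x hx
    obtain ⟨c, hc⟩ := (Submodule.mem_span_range_iff_exists_fun ℂ).mp hx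
    rw [Fin.sum_univ_two] at hc
    exact ⟨c 0, c 1, by rw [← hc]; simp⟩
  -- isotropic pairs give elements of Z
  have Z_mk : ∀ v w : V, LinearIndependent ℂ ![v, w] → ω v w = 0 →
      (Submodule.span ℂ (Set.range ![v, w]), Submodule.span ℂ {v}) ∈ Z := by
    intro v w hli hvw
    refine ⟨flag_mk v w hli, ?_⟩
    intro x hx y hy
    obtain ⟨a, b, rfl⟩ := mem_pair v w x hx
    obtain ⟨c, d, rfl⟩ := mem_pair v w y hy
    have hwv : ω w v = 0 := by rw [← LinearMap.IsAlt.neg halt v w, hvw, neg_zero]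
    simp [map_add, map_smul, smul_eq_mul, hvw, hwv, halt v, halt w, mul_comm]
  refine ⟨?_, ?_, ?_, ?_, ?_⟩
  · -- nonempty
    obtain ⟨v, hv⟩ := exists_ne (0 : V)
    have hker : ¬ (LinearMap.ker (ω v) ≤ Submodule.span ℂ {v}) := by
      intro hle
      have h1 : finrank ℂ (LinearMap.ker (ω v)) ≤ 1 := by
        have := Submodule.finrank_mono hle
        rwa [finrank_span_singleton hv] at this
      have h2 := LinearMap.finrank_range_add_finrank_ker (ω v)
      have h3 : finrank ℂ (LinearMap.range (ω v)) ≤ 1 :=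
        (Submodule.finrank_le _).trans (by simp)
      rw [hdim] at h2
      omega
    obtain ⟨w, hwker, hwns⟩ := SetLike.not_le_iff_exists.mp hker
    have hli := pair_li_of_not_mem hv hwns
    exact ⟨_, Z_mk v w hli (LinearMap.mem_ker.mp hwker)⟩
  · -- proper
    rw [Set.ssubset_iff_of_subset (fun p hp => hp.1)]
    obtain ⟨v, hv⟩ := exists_ne (0 : V)
    obtain ⟨u, hu⟩ : ∃ u, ω v u ≠ 0 := by
      by_contra hcon
      push_neg at hcon
      exact hv (hnd.1 v hcon)
    have hli : LinearIndependent ℂ ![v, u] := by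
      apply pair_li_of''
      intro c d hcd
      have h1 : ω v (c • v + d • u) = d * ω v u := by
        simp [halt v, smul_eq_mul]
      rw [hcd, map_zero] at h1
      have hd : d = 0 := by
        rcases mul_eq_zero.mp h1.symm with h | h
        · exact h
        · exact absurd h hu
      rw [hd, zero_smul, add_zero, smul_eq_zero] at hcd
      exact ⟨hcd.resolve_right hv, hd⟩
    refine ⟨_, flag_mk v u hli, ?_⟩
    intro hZ
    exact hu (hZ.2 v (Submodule.subset_span ⟨0, rfl⟩) u (Submodule.subset_span ⟨1, rfl⟩))
  · -- stability
    intro g hg p hp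
    obtain ⟨⟨hle, h1, h2⟩, hiso⟩ := hp
    refine ⟨⟨Submodule.map_mono hle, ?_, ?_⟩, ?_⟩
    · rw [LinearEquiv.finrank_map_eq]; exact h1
    · rw [LinearEquiv.finrank_map_eq]; exact h2
    · rintro x ⟨a, ha, rfl⟩ y ⟨b, hb, rfl⟩
      rw [show ((g : V →ₗ[ℂ] V) a) = g a from rfl, show ((g : V →ₗ[ℂ] V) b) = g b from rfl,
        hg a b]
      exact hiso a ha b hb
  · -- transitivity
    intro p hp q hq
    obtain ⟨⟨hle, h1, h2⟩, hiso⟩ := hp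
    obtain ⟨⟨hle', h1', h2'⟩, hiso'⟩ := hq
    obtain ⟨v, w, hli, hF, hE⟩ := flag_extract p hle h1 h2
    obtain ⟨v', w', hli', hF', hE'⟩ := flag_extract q hle' h1' h2'
    have hvmem : v ∈ p.1 := hle (hF ▸ Submodule.mem_span_singleton_self v)
    have hwmem : w ∈ p.1 := hE ▸ Submodule.subset_span ⟨1, rfl⟩
    have hvw : ω v w = 0 := hiso v hvmem w hwmem
    have hvmem' : v' ∈ q.1 := hle' (hF' ▸ Submodule.mem_span_singleton_self v')
    have hwmem' : w' ∈ q.1 := hE' ▸ Submodule.subset_span ⟨1, rfl⟩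
    have hvw' : ω v' w' = 0 := hiso' v' hvmem' w' hwmem'
    obtain ⟨g, hg, hgv, hgw⟩ := trans_pairs ω halt hnd hli hli' hvw hvw'
    refine ⟨g, hg, ?_, ?_⟩
    · rw [hE, hE', map_span_pair, hgv, hgw]
    · rw [hF, hF', Submodule.map_span, Set.image_singleton]
      have hc : (g : V →ₗ[ℂ] V) v = v' := hgv
      rw [hc]
  · -- closedness
    have hcont : Continuous fun p : V × V => ω p.1 p.2 := by
      let e : (V →ₗ[ℂ] ℂ) ≃ₗ[ℂ] (V →L[ℂ] ℂ) := LinearMap.toContinuousLinearMap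
      let f1 : V →ₗ[ℂ] (V →L[ℂ] ℂ) := e.toLinearMap ∘ₗ ω
      have hf1 : Continuous f1 := f1.continuous_of_finiteDimensional
      have : Continuous fun p : V × V => (f1 p.1) p.2 :=
        (hf1.comp continuous_fst).clm_apply continuous_snd
      exact this
    have : {q : {p : V × V // LinearIndependent ℂ ![p.1, p.2]} | ω q.val.1 q.val.2 = 0} =
        (fun q : {p : V × V // LinearIndependent ℂ ![p.1, p.2]} =>
          ω q.val.1 q.val.2) ⁻¹' {0} := by
      ext q
      simp
    rw [this]
    exact isClosed_singleton.preimage (hcont.comp continuous_subtype_val)
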